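/- Let r₀ > 0 and let p ∈ C²([0,r₀]) satisfy −∫₀^r s² p'(s) ds ≥ 0 for all r ∈ [0,r₀]. Define B_θ(r) = ( −(2/r²) ∫₀^r s² p'(s) ds )^{1/2} for r ∈ (0,r₀]. Then for every r ∈ (0,r₀) the function r ↦ p(r) + B_θ(r)²/2 is differentiable at r with derivative −B_θ(r)²/r; i.e. the pair (p, B_θ) solves the cylindrically symmetric z-pinch equilibrium equation d/dr ( p + (1/2)B_θ² ) = −B_θ²/r. -/

import Mathlib

open Set MeasureTheory

/-- part of Lemma 2.1. For an admissible pressure profile `p ∈ C²([0,r₀])`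
with `-∫₀^r s² p'(s) ds ≥ 0`, the field `B_θ(r) = (-(2/r²) ∫₀^r s² p'(s) ds)^{1/2}` solves the
z-pinch equilibrium ODE `d/dr (p + B_θ²/2) = -B_θ²/r` on `(0, r₀)`. -/
theorem zpinch_equilibrium_ode
    (r₀ : ℝ) (hr₀ : 0 < r₀)
    (p p' p'' : ℝ → ℝ)
    (hp : ∀ r ∈ Icc (0:ℝ) r₀, HasDerivWithinAt p (p' r) (Icc (0:ℝ) r₀) r)
    (hp' : ∀ r ∈ Icc (0:ℝ) r₀, HasDerivWithinAt p' (p'' r) (Icc (0:ℝ) r₀) r)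
    (hp''c : ContinuousOn p'' (Icc (0:ℝ) r₀))
    (hint : ∀ r ∈ Icc (0:ℝ) r₀, 0 ≤ -∫ s in (0:ℝ)..r, s ^ 2 * p' s)
    (Bθ : ℝ → ℝ)
    (hBθ : ∀ r ∈ Ioc (0:ℝ) r₀,
      Bθ r = Real.sqrt (-(2 / r ^ 2) * ∫ s in (0:ℝ)..r, s ^ 2 * p' s)) :
    ∀ r ∈ Ioo (0:ℝ) r₀,
      HasDerivAt (fun s => p s + Bθ s ^ 2 / 2) (-(Bθ r ^ 2) / r) r := by
  intro r hr
  obtain ⟨hr0, hrr0⟩ := hr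
  set I : ℝ → ℝ := fun s => ∫ t in (0:ℝ)..s, t ^ 2 * p' t with hI
  -- p' is continuous on Icc
  have hp'c : ContinuousOn p' (Icc (0:ℝ) r₀) := fun x hx =>
    (hp' x hx).continuousWithinAt
  have hfc : ContinuousOn (fun t : ℝ => t ^ 2 * p' t) (Icc (0:ℝ) r₀) :=
    (continuous_pow 2).continuousOn.mul hp'c
  have hIoomem : Ioo (0:ℝ) r₀ ∈ nhds r := isOpen_Ioo.mem_nhds ⟨hr0, hrr0⟩
  have hIccmem : Icc (0:ℝ) r₀ ∈ nhds r := Filter.mem_of_superset hIoomem Ioo_subset_Icc_self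
  -- derivative of I at r
  have hII : HasDerivAt I (r ^ 2 * p' r) r := by
    apply intervalIntegral.integral_hasDerivAt_right
    · exact (hfc.mono (by
        rw [uIcc_of_le hr0.le]
        exact Icc_subset_Icc le_rfl hrr0.le)).intervalIntegrable
    · exact ⟨Icc (0:ℝ) r₀, hIccmem, hfc.aestronglyMeasurable measurableSet_Icc⟩
    · exact hfc.continuousAt hIccmem
  have hpr : HasDerivAt p (p' r) r := (hp r ⟨hr0.le, hrr0.le⟩).hasDerivAt hIccmem
  have hrne : r ≠ 0 := ne_of_gt hr0
  -- the main formula function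
  have hmain : HasDerivAt (fun s => p s - I s / s ^ 2)
      (-(-(2 / r ^ 2) * I r) / r) r := by
    have hden : HasDerivAt (fun s : ℝ => s ^ 2) (2 * r) r := by
      simpa using (hasDerivAt_pow 2 r)
    have := hpr.sub ((hII.div hden (by positivity)))
    convert this using 1
    · rfl
    · rfl
    · rfl
    field_simp
    ring
  -- Bθ² equals the formula on Ioo
  have hsq : ∀ s ∈ Ioo (0:ℝ) r₀, Bθ s ^ 2 = -(2 / s ^ 2) * I s := by
    intro s hs
    rw [hBθ s ⟨hs.1, hs.2.le⟩, sq, Real.mul_self_sqrt]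
    have h1 : -(2 / s ^ 2) * I s = (2 / s ^ 2) * (-I s) := by ring
    rw [h1]
    exact mul_nonneg (by positivity) (hint s ⟨hs.1.le, hs.2.le⟩)
  have heq : (fun s => p s + Bθ s ^ 2 / 2) =ᶠ[nhds r] (fun s => p s - I s / s ^ 2) := by
    filter_upwards [hIoomem] with s hs
    rw [hsq s hs]
    have hs0 : s ≠ 0 := ne_of_gt hs.1
    field_simp
    ring
  have hfinal := hmain.congr_of_eventuallyEq heq
  convert hfinal using 1
  · rfl
  · rfl
  rw [hsq r ⟨hr0, hrr0⟩]
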